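/- Let Φ(ρ) = Σ_i V_i ρ V_i* be a trace-preserving completely positive map on M_n and let A be a *-subalgebra of M_n contained in the commutant {V_i* V_j}'_{i,j}. Set R = Φ(I) = Σ_i V_i V_i*. Then for all A ∈ A: (1) Φ(A) commutes with R; (2) Φ(A)Φ(X) = R Φ(AX) for all X ∈ M_n; and (3) Φ(X)Φ(A) = Φ(XA) R for all X ∈ M_n. -/
import Mathlib


open Matrix ComplexOrder

/-- The completely positive map with Kraus operators `V i`. -/
noncomputable def krausMap {d n m : ℕ} (V : Fin d → Matrix (Fin m) (Fin n) ℂ) :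
    Matrix (Fin n) (Fin n) ℂ →ₗ[ℂ] Matrix (Fin m) (Fin m) ℂ where
  toFun X := ∑ i, V i * X * (V i)ᴴ
  map_add' X Y := by simp [Matrix.mul_add, Matrix.add_mul, Finset.sum_add_distrib]
  map_smul' c X := by simp [Matrix.mul_smul, Matrix.smul_mul, Finset.smul_sum]

/-- The complementary map `Φ^C(ρ) = ∑_{i,j} tr(ρ V_j* V_i) E_{ij}`. -/
noncomputable def complMap {d n m : ℕ} (V : Fin d → Matrix (Fin m) (Fin n) ℂ) :
    Matrix (Fin n) (Fin n) ℂ →ₗ[ℂ] Matrix (Fin d) (Fin d) ℂ where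
  toFun X := Matrix.of fun i j => (X * ((V j)ᴴ * V i)).trace
  map_add' X Y := by
    ext i j
    simp [Matrix.add_mul]
  map_smul' c X := by
    ext i j
    simp [Matrix.smul_mul]

/-- The compression map `P_Q(X) = Q X Q`. -/
noncomputable def comprMap {n : ℕ} (Q : Matrix (Fin n) (Fin n) ℂ) :
    Matrix (Fin n) (Fin n) ℂ →ₗ[ℂ] Matrix (Fin n) (Fin n) ℂ where
  toFun X := Q * X * Q
  map_add' X Y := by simp [Matrix.mul_add, Matrix.add_mul]
  map_smul' c X := by simp [Matrix.mul_smul, Matrix.smul_mul]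

/-- The orthogonal complement of a set of matrices with respect to the trace
(Hilbert–Schmidt) inner product `⟨A, B⟩ = tr(A* B)`. -/
noncomputable def traceOrthCompl {n : ℕ} (S : Set (Matrix (Fin n) (Fin n) ℂ)) :
    Submodule ℂ (Matrix (Fin n) (Fin n) ℂ) where
  carrier := {X | ∀ A ∈ S, (Aᴴ * X).trace = 0}
  add_mem' := by
    intro a b ha hb A hA
    simp [Matrix.mul_add, ha A hA, hb A hA]
  zero_mem' := by intro A hA; simp
  smul_mem' := by
    intro c x hx A hA
    simp [Matrix.mul_smul, hx A hA]

/-- The commutant of a set of matrices, as a submodule of `M_n`. -/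
noncomputable def commutantSub {n : ℕ} (S : Set (Matrix (Fin n) (Fin n) ℂ)) :
    Submodule ℂ (Matrix (Fin n) (Fin n) ℂ) where
  carrier := {X | ∀ A ∈ S, X * A = A * X}
  add_mem' := by
    intro a b ha hb A hA
    simp [Matrix.mul_add, Matrix.add_mul, ha A hA, hb A hA]
  zero_mem' := by intro A hA; simp
  smul_mem' := by
    intro c x hx A hA
    simp [Matrix.mul_smul, Matrix.smul_mul, hx A hA]

/-- The multiplicative domain of a linear map on `M_n`, as a set. -/
noncomputable def multDomain {n m : ℕ}
    (Φ : Matrix (Fin n) (Fin n) ℂ →ₗ[ℂ] Matrix (Fin m) (Fin m) ℂ) :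
    Set (Matrix (Fin n) (Fin n) ℂ) :=
  {A | ∀ X, Φ (A * X) = Φ A * Φ X ∧ Φ (X * A) = Φ X * Φ A}


lemma krausMap_apply' {d n m : ℕ} (V : Fin d → Matrix (Fin m) (Fin n) ℂ)
    (X : Matrix (Fin n) (Fin n) ℂ) : krausMap V X = ∑ i, V i * X * (V i)ᴴ := rfl

/-- if the *-subalgebra `A` lies in the commutant of the `V_i* V_j`, and
`R = Φ(I)`, then `Φ(A)` commutes with `R`, `Φ(A)Φ(X) = R Φ(AX)`, and
`Φ(X)Φ(A) = Φ(XA) R`. -/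
theorem stmt_7 {d n : ℕ} (V : Fin d → Matrix (Fin n) (Fin n) ℂ)
    (hV : ∑ i, (V i)ᴴ * V i = 1)
    (A : NonUnitalStarSubalgebra ℂ (Matrix (Fin n) (Fin n) ℂ))
    (hA : ∀ a ∈ A, ∀ i j, a * ((V i)ᴴ * V j) = ((V i)ᴴ * V j) * a) :
    ∀ a ∈ A,
      (krausMap V a * krausMap V 1 = krausMap V 1 * krausMap V a) ∧
      (∀ X, krausMap V a * krausMap V X = krausMap V 1 * krausMap V (a * X)) ∧
      (∀ X, krausMap V X * krausMap V a = krausMap V (X * a) * krausMap V 1) := by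
  have h2 : ∀ a ∈ A, ∀ X, krausMap V a * krausMap V X = krausMap V 1 * krausMap V (a * X) := by
    intro a ha X
    simp only [krausMap_apply']
    rw [Finset.sum_mul, Finset.sum_mul]
    refine Finset.sum_congr rfl fun i _ => ?_
    rw [Finset.mul_sum, Finset.mul_sum]
    refine Finset.sum_congr rfl fun j _ => ?_
    calc V i * a * (V i)ᴴ * (V j * X * (V j)ᴴ)
        = V i * (a * ((V i)ᴴ * V j)) * (X * (V j)ᴴ) := by noncomm_ring
      _ = V i * (((V i)ᴴ * V j) * a) * (X * (V j)ᴴ) := by rw [hA a ha i j]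
      _ = V i * 1 * (V i)ᴴ * (V j * (a * X) * (V j)ᴴ) := by noncomm_ring
  have h3 : ∀ a ∈ A, ∀ X, krausMap V X * krausMap V a = krausMap V (X * a) * krausMap V 1 := by
    intro a ha X
    simp only [krausMap_apply']
    rw [Finset.sum_mul, Finset.sum_mul]
    refine Finset.sum_congr rfl fun j _ => ?_
    rw [Finset.mul_sum, Finset.mul_sum]
    refine Finset.sum_congr rfl fun i _ => ?_
    calc V j * X * (V j)ᴴ * (V i * a * (V i)ᴴ)
        = V j * X * (((V j)ᴴ * V i) * a) * (V i)ᴴ := by noncomm_ring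
      _ = V j * X * (a * ((V j)ᴴ * V i)) * (V i)ᴴ := by rw [hA a ha j i]
      _ = V j * (X * a) * (V j)ᴴ * (V i * 1 * (V i)ᴴ) := by noncomm_ring
  intro a ha
  refine ⟨?_, h2 a ha, h3 a ha⟩
  have := h2 a ha 1
  rwa [mul_one] at this
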